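/- For every pair of integers p ≥ 3 and q ≥ 3, the triangle group Γ = Δ(p,q,∞) ≅ C_p * C_q has uncountably many conjugacy classes of nonparabolic maximal subgroups; that is, the set of conjugacy classes of subgroups of Γ that contain no parabolic element and are maximal proper subgroups of Γ is uncountable. -/

import Mathlib

def triangleRels (p q : ℕ) : Set (FreeGroup (Fin 2)) :=
  {FreeGroup.of 0 ^ p, FreeGroup.of 1 ^ q}

/-- The triangle group Δ(p,q,∞) = ⟨X, Y ∣ X^p = Y^q = 1⟩ ≅ C_p * C_q. -/
abbrev Tri (p q : ℕ) : Type := PresentedGroup (triangleRels p q)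

def triX (p q : ℕ) : Tri p q := PresentedGroup.of 0
def triY (p q : ℕ) : Tri p q := PresentedGroup.of 1
def triZ (p q : ℕ) : Tri p q := (triX p q * triY p q)⁻¹

/-- An element is parabolic if it is conjugate to a nonzero power of Z. -/
def IsParabolic {p q : ℕ} (g : Tri p q) : Prop :=
  ∃ (k : ℤ) (c : Tri p q), k ≠ 0 ∧ g = c * (triZ p q) ^ k * c⁻¹

/-- A subgroup is nonparabolic if it contains no parabolic element. -/
def Nonparabolic {p q : ℕ} (M : Subgroup (Tri p q)) : Prop :=
  ∀ g ∈ M, ¬ IsParabolic g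

/-- A Neumann subgroup: a complement to P = ⟨Z⟩, i.e. M ∩ P = 1 and MP = Γ. -/
def IsNeumann {p q : ℕ} (M : Subgroup (Tri p q)) : Prop :=
  M ⊓ Subgroup.zpowers (triZ p q) = ⊥ ∧
  ∀ g : Tri p q, ∃ m ∈ M, ∃ k : ℤ, g = m * (triZ p q) ^ k

/-- Conjugacy of subgroups (restricted to those satisfying a property `P`). -/
def conjRel {G : Type*} [Group G] (P : Subgroup G → Prop)
    (M N : {M : Subgroup G // P M}) : Prop :=
  ∃ g : G, (N : Subgroup G) = Subgroup.map (MulAut.conj g).toMonoidHom (M : Subgroup G)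


namespace TriCons

/-- Period of the diagram. -/
def Pz (p q : ℕ) : ℤ := 2*(p:ℤ) + 2*(q:ℤ) - 5

/-- per-link choice: 1 or 2. -/
def av (f : ℕ → Bool) (m : ℤ) : ℤ := if f m.toNat then 2 else 1

def xf (p q : ℕ) (f : ℕ → Bool) (u : ℤ) : ℤ :=
  if u = 0 then 0
  else if u < 0 then (-u - 1) * Pz p q + ((p:ℤ) + 2*(q:ℤ) - 3)
  else
    let m : ℤ := (u - 1) / Pz p q
    let r : ℤ := u - m * Pz p q
    let A : ℤ := av f m
    if r < A then u + 1
    else if r = A then u + (q:ℤ)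
    else if r ≤ (q:ℤ) + A - 1 then u
    else if r ≤ (q:ℤ) + (p:ℤ) - 2 then u + 1
    else if r = (q:ℤ) + (p:ℤ) - 1 then u - ((q:ℤ) + (p:ℤ) - 2)
    else if r ≤ (p:ℤ) + 2*(q:ℤ) - 4 then u
    else if r ≤ Pz p q - 1 then u + 1
    else -(m + 1)

def yf (p q : ℕ) (f : ℕ → Bool) (u : ℤ) : ℤ :=
  if u = 0 then (p:ℤ) + (q:ℤ) - 1
  else if u < 0 then (-u - 1) * Pz p q
  else
    let m : ℤ := (u - 1) / Pz p q
    let r : ℤ := u - m * Pz p q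
    let A : ℤ := av f m
    if r < A then u
    else if r ≤ (q:ℤ) + A - 2 then u + 1
    else if r = (q:ℤ) + A - 1 then u - ((q:ℤ) - 1)
    else if r ≤ (q:ℤ) + (p:ℤ) - 2 then u
    else if r ≤ (p:ℤ) + 2*(q:ℤ) - 5 then u + 1
    else if r = (p:ℤ) + 2*(q:ℤ) - 4 then -(m + 1)
    else if r ≤ Pz p q - 1 then u
    else u + ((p:ℤ) + (q:ℤ) - 1)

variable {p q : ℕ} {f : ℕ → Bool}

lemma av_cases (f : ℕ → Bool) (m : ℤ) : av f m = 1 ∨ av f m = 2 := by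
  unfold av; split <;> simp

lemma Pz_ge (hp : 3 ≤ p) (hq : 3 ≤ q) : 7 ≤ Pz p q := by
  unfold Pz; omega

lemma div_aux (hp : 3 ≤ p) (hq : 3 ≤ q) (m r : ℤ) (hm : 0 ≤ m) (h1 : 1 ≤ r) (h2 : r ≤ Pz p q) : (m * Pz p q + r - 1) / Pz p q = m := by
  have hP : Pz p q ≠ 0 := by have := Pz_ge hp hq; omega
  have e : m * Pz p q + r - 1 = (r - 1) + m * Pz p q := by ring
  rw [e, Int.add_mul_ediv_right _ _ hP, Int.ediv_eq_zero_of_lt (by omega) (by omega), zero_add]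

lemma xf_eval (hp : 3 ≤ p) (hq : 3 ≤ q) (m r : ℤ) (hm : 0 ≤ m) (h1 : 1 ≤ r) (h2 : r ≤ Pz p q) :
    xf p q f (m * Pz p q + r) =
      (if r < av f m then m * Pz p q + r + 1
       else if r = av f m then m * Pz p q + r + (q:ℤ)
       else if r ≤ (q:ℤ) + av f m - 1 then m * Pz p q + r
       else if r ≤ (q:ℤ) + (p:ℤ) - 2 then m * Pz p q + r + 1
       else if r = (q:ℤ) + (p:ℤ) - 1 then m * Pz p q + r - ((q:ℤ) + (p:ℤ) - 2)
       else if r ≤ (p:ℤ) + 2*(q:ℤ) - 4 then m * Pz p q + r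
       else if r ≤ Pz p q - 1 then m * Pz p q + r + 1
       else -(m + 1)) := by
  have hP := Pz_ge hp hq
  have hmP : 0 ≤ m * Pz p q := mul_nonneg hm (by omega)
  have hu0 : ¬ (m * Pz p q + r = 0) := by omega
  have hun : ¬ (m * Pz p q + r < 0) := by omega
  rw [xf, if_neg hu0, if_neg hun]
  simp only [div_aux hp hq m r hm h1 h2]
  have e : m * Pz p q + r - m * Pz p q = r := by ring
  rw [e]

lemma yf_eval (hp : 3 ≤ p) (hq : 3 ≤ q) (m r : ℤ) (hm : 0 ≤ m) (h1 : 1 ≤ r) (h2 : r ≤ Pz p q) :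
    yf p q f (m * Pz p q + r) =
      (if r < av f m then m * Pz p q + r
       else if r ≤ (q:ℤ) + av f m - 2 then m * Pz p q + r + 1
       else if r = (q:ℤ) + av f m - 1 then m * Pz p q + r - ((q:ℤ) - 1)
       else if r ≤ (q:ℤ) + (p:ℤ) - 2 then m * Pz p q + r
       else if r ≤ (p:ℤ) + 2*(q:ℤ) - 5 then m * Pz p q + r + 1
       else if r = (p:ℤ) + 2*(q:ℤ) - 4 then -(m + 1)
       else if r ≤ Pz p q - 1 then m * Pz p q + r
       else m * Pz p q + r + ((p:ℤ) + (q:ℤ) - 1)) := by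
  have hP := Pz_ge hp hq
  have hmP : 0 ≤ m * Pz p q := mul_nonneg hm (by omega)
  have hu0 : ¬ (m * Pz p q + r = 0) := by omega
  have hun : ¬ (m * Pz p q + r < 0) := by omega
  rw [yf, if_neg hu0, if_neg hun]
  simp only [div_aux hp hq m r hm h1 h2]
  have e : m * Pz p q + r - m * Pz p q = r := by ring
  rw [e]

lemma xf_zero : xf p q f 0 = 0 := by simp [xf]

lemma xf_neg (u : ℤ) (hu : u < 0) :
    xf p q f u = (-u - 1) * Pz p q + ((p:ℤ) + 2*(q:ℤ) - 3) := by
  rw [xf, if_neg (by omega), if_pos hu]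

lemma yf_zero : yf p q f 0 = (p:ℤ) + (q:ℤ) - 1 := by simp [yf]

lemma yf_neg (u : ℤ) (hu : u < 0) : yf p q f u = (-u - 1) * Pz p q := by
  rw [yf, if_neg (by omega), if_pos hu]

/-- main relation: x (y u) = u + 1 -/
theorem xy_shift (hp : 3 ≤ p) (hq : 3 ≤ q) (u : ℤ) :
    xf p q f (yf p q f u) = u + 1 := by
  have hP := Pz_ge hp hq
  have hPd : Pz p q = 2*(p:ℤ) + 2*(q:ℤ) - 5 := rfl
  rcases lt_trichotomy u 0 with hu | hu | hu
  · -- u < 0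
    rw [yf_neg u hu]
    by_cases h1 : u = -1
    · subst h1
      have e : (-(-1:ℤ) - 1) * Pz p q = 0 := by ring
      rw [e, xf_zero]; ring
    · -- u ≤ -2 : y u = (-u-1)*P = ((-u-2))*P + P
      have e : (-u - 1) * Pz p q = (-u-2) * Pz p q + Pz p q := by ring
      rw [e, xf_eval hp hq (-u-2) (Pz p q) (by omega) (by omega) (by omega)]
      have hA := av_cases f (-u-2)
      rw [if_neg (by omega), if_neg (by omega), if_neg (by omega), if_neg (by omega),
        if_neg (by omega), if_neg (by omega), if_neg (by omega)]
      omega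
  · -- u = 0
    subst hu; rw [yf_zero]
    have e : (p:ℤ) + (q:ℤ) - 1 = 0 * Pz p q + ((q:ℤ) + (p:ℤ) - 1) := by ring
    rw [e, xf_eval hp hq 0 ((q:ℤ) + (p:ℤ) - 1) (by omega) (by omega) (by omega)]
    have hA := av_cases f 0
    rw [if_neg (by omega), if_neg (by omega), if_neg (by omega), if_neg (by omega),
      if_pos rfl]
    ring
  · -- u > 0
    obtain ⟨m, r, hm, h1, h2, rfl⟩ : ∃ m r, 0 ≤ m ∧ 1 ≤ r ∧ r ≤ Pz p q ∧ u = m * Pz p q + r := by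
      refine ⟨(u-1)/Pz p q, u - ((u-1)/Pz p q) * Pz p q, Int.ediv_nonneg (by omega) (by omega),
        ?_, ?_, by ring⟩
      · have h3 := Int.mul_ediv_add_emod (u-1) (Pz p q)
        have h0 := Int.emod_nonneg (u-1) (by omega : Pz p q ≠ 0)
        have hc : Pz p q * ((u-1)/Pz p q) = ((u-1)/Pz p q) * Pz p q := mul_comm _ _
        omega
      · have h3 := Int.mul_ediv_add_emod (u-1) (Pz p q)
        have h0 := Int.emod_lt_of_pos (u-1) (by omega : 0 < Pz p q)
        have hc : Pz p q * ((u-1)/Pz p q) = ((u-1)/Pz p q) * Pz p q := mul_comm _ _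
        omega
    have hA := av_cases f m
    rw [yf_eval hp hq m r hm h1 h2]
    -- case split on y branches
    by_cases c1 : r < av f m
    · rw [if_pos c1, xf_eval hp hq m r hm h1 h2, if_pos c1]
    rw [if_neg c1]
    by_cases c2 : r ≤ (q:ℤ) + av f m - 2
    · rw [if_pos c2]
      have e : m * Pz p q + r + 1 = m * Pz p q + (r+1) := by ring
      rw [e, xf_eval hp hq m (r+1) hm (by omega) (by omega)]
      rw [if_neg (by omega), if_neg (by omega), if_pos (by omega)]
    rw [if_neg c2]
    by_cases c3 : r = (q:ℤ) + av f m - 1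
    · rw [if_pos c3]
      have e : m * Pz p q + r - ((q:ℤ) - 1) = m * Pz p q + av f m := by omega
      rw [e, xf_eval hp hq m (av f m) hm (by omega) (by omega)]
      rw [if_neg (by omega), if_pos rfl]
      omega
    rw [if_neg c3]
    by_cases c4 : r ≤ (q:ℤ) + (p:ℤ) - 2
    · rw [if_pos c4, xf_eval hp hq m r hm h1 h2]
      rw [if_neg (by omega), if_neg (by omega), if_neg (by omega), if_pos (by omega)]
    rw [if_neg c4]
    by_cases c5 : r ≤ (p:ℤ) + 2*(q:ℤ) - 5
    · rw [if_pos c5]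
      have e : m * Pz p q + r + 1 = m * Pz p q + (r+1) := by ring
      rw [e, xf_eval hp hq m (r+1) hm (by omega) (by omega)]
      rw [if_neg (by omega), if_neg (by omega), if_neg (by omega), if_neg (by omega),
        if_neg (by omega), if_pos (by omega)]
    rw [if_neg c5]
    by_cases c6 : r = (p:ℤ) + 2*(q:ℤ) - 4
    · rw [if_pos c6, xf_neg _ (by omega)]
      have e : -(-(m+1)) - 1 = m := by ring
      rw [e]; omega
    rw [if_neg c6]
    by_cases c7 : r ≤ Pz p q - 1
    · rw [if_pos c7, xf_eval hp hq m r hm h1 h2]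
      rw [if_neg (by omega), if_neg (by omega), if_neg (by omega), if_neg (by omega),
        if_neg (by omega), if_neg (by omega), if_pos (by omega)]
    · rw [if_neg c7]
      -- r = P : y u = u + (p+q-1), lands in link m+1 at r' = q+p-1
      have hr : r = Pz p q := by omega
      have e : m * Pz p q + r + ((p:ℤ) + (q:ℤ) - 1) = (m+1) * Pz p q + ((q:ℤ) + (p:ℤ) - 1) := by
        rw [hr]; ring
      rw [e, xf_eval hp hq (m+1) ((q:ℤ) + (p:ℤ) - 1) (by omega) (by omega) (by omega)]
      have hA' := av_cases f (m+1)
      rw [if_neg (by omega), if_neg (by omega), if_neg (by omega), if_neg (by omega),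
        if_pos rfl]
      omega

lemma xf_b1 (hp : 3 ≤ p) (hq : 3 ≤ q) (m r : ℤ) (hm : 0 ≤ m) (h1 : 1 ≤ r) (h : r < av f m) :
    xf p q f (m * Pz p q + r) = m * Pz p q + r + 1 := by
  have hA := av_cases f m; have hP := Pz_ge hp hq; have hPd : Pz p q = 2*(p:ℤ)+2*(q:ℤ)-5 := rfl
  rw [xf_eval hp hq m r hm h1 (by omega), if_pos h]

lemma xf_b2 (hp : 3 ≤ p) (hq : 3 ≤ q) (m r : ℤ) (hm : 0 ≤ m) (h : r = av f m) :
    xf p q f (m * Pz p q + r) = m * Pz p q + r + (q:ℤ) := by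
  have hA := av_cases f m; have hP := Pz_ge hp hq; have hPd : Pz p q = 2*(p:ℤ)+2*(q:ℤ)-5 := rfl
  rw [xf_eval hp hq m r hm (by omega) (by omega), if_neg (by omega), if_pos h]

lemma xf_b3 (hp : 3 ≤ p) (hq : 3 ≤ q) (m r : ℤ) (hm : 0 ≤ m) (h1 : av f m < r) (h2 : r ≤ (q:ℤ) + av f m - 1) :
    xf p q f (m * Pz p q + r) = m * Pz p q + r := by
  have hA := av_cases f m; have hP := Pz_ge hp hq; have hPd : Pz p q = 2*(p:ℤ)+2*(q:ℤ)-5 := rfl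
  rw [xf_eval hp hq m r hm (by omega) (by omega), if_neg (by omega), if_neg (by omega),
    if_pos h2]

lemma xf_b4 (hp : 3 ≤ p) (hq : 3 ≤ q) (m r : ℤ) (hm : 0 ≤ m) (h1 : (q:ℤ) + av f m ≤ r) (h2 : r ≤ (q:ℤ) + (p:ℤ) - 2) :
    xf p q f (m * Pz p q + r) = m * Pz p q + r + 1 := by
  have hA := av_cases f m; have hP := Pz_ge hp hq; have hPd : Pz p q = 2*(p:ℤ)+2*(q:ℤ)-5 := rfl
  rw [xf_eval hp hq m r hm (by omega) (by omega), if_neg (by omega), if_neg (by omega),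
    if_neg (by omega), if_pos h2]

lemma xf_b5 (hp : 3 ≤ p) (hq : 3 ≤ q) (m r : ℤ) (hm : 0 ≤ m) (h : r = (q:ℤ) + (p:ℤ) - 1) :
    xf p q f (m * Pz p q + r) = m * Pz p q + 1 := by
  have hA := av_cases f m; have hP := Pz_ge hp hq; have hPd : Pz p q = 2*(p:ℤ)+2*(q:ℤ)-5 := rfl
  rw [xf_eval hp hq m r hm (by omega) (by omega), if_neg (by omega), if_neg (by omega),
    if_neg (by omega), if_neg (by omega), if_pos h]
  omega

lemma xf_b6 (hp : 3 ≤ p) (hq : 3 ≤ q) (m r : ℤ) (hm : 0 ≤ m) (h1 : (q:ℤ) + (p:ℤ) - 1 < r) (h2 : r ≤ (p:ℤ) + 2*(q:ℤ) - 4) :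
    xf p q f (m * Pz p q + r) = m * Pz p q + r := by
  have hA := av_cases f m; have hP := Pz_ge hp hq; have hPd : Pz p q = 2*(p:ℤ)+2*(q:ℤ)-5 := rfl
  rw [xf_eval hp hq m r hm (by omega) (by omega), if_neg (by omega), if_neg (by omega),
    if_neg (by omega), if_neg (by omega), if_neg (by omega), if_pos h2]

lemma xf_b7 (hp : 3 ≤ p) (hq : 3 ≤ q) (m r : ℤ) (hm : 0 ≤ m) (h1 : (p:ℤ) + 2*(q:ℤ) - 4 < r) (h2 : r ≤ Pz p q - 1) :
    xf p q f (m * Pz p q + r) = m * Pz p q + r + 1 := by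
  have hA := av_cases f m; have hP := Pz_ge hp hq; have hPd : Pz p q = 2*(p:ℤ)+2*(q:ℤ)-5 := rfl
  rw [xf_eval hp hq m r hm (by omega) (by omega), if_neg (by omega), if_neg (by omega),
    if_neg (by omega), if_neg (by omega), if_neg (by omega), if_neg (by omega), if_pos h2]

lemma xf_b8 (hp : 3 ≤ p) (hq : 3 ≤ q) (m : ℤ) (hm : 0 ≤ m) : xf p q f (m * Pz p q + Pz p q) = -(m + 1) := by
  have hA := av_cases f m; have hP := Pz_ge hp hq; have hPd : Pz p q = 2*(p:ℤ)+2*(q:ℤ)-5 := rfl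
  rw [xf_eval hp hq m (Pz p q) hm (by omega) le_rfl, if_neg (by omega), if_neg (by omega),
    if_neg (by omega), if_neg (by omega), if_neg (by omega), if_neg (by omega),
    if_neg (by omega)]

lemma yf_c1 (hp : 3 ≤ p) (hq : 3 ≤ q) (m r : ℤ) (hm : 0 ≤ m) (h1 : 1 ≤ r) (h : r < av f m) :
    yf p q f (m * Pz p q + r) = m * Pz p q + r := by
  have hA := av_cases f m; have hP := Pz_ge hp hq; have hPd : Pz p q = 2*(p:ℤ)+2*(q:ℤ)-5 := rfl
  rw [yf_eval hp hq m r hm h1 (by omega), if_pos h]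

lemma yf_c2 (hp : 3 ≤ p) (hq : 3 ≤ q) (m r : ℤ) (hm : 0 ≤ m) (h1 : av f m ≤ r) (h2 : r ≤ (q:ℤ) + av f m - 2) :
    yf p q f (m * Pz p q + r) = m * Pz p q + r + 1 := by
  have hA := av_cases f m; have hP := Pz_ge hp hq; have hPd : Pz p q = 2*(p:ℤ)+2*(q:ℤ)-5 := rfl
  rw [yf_eval hp hq m r hm (by omega) (by omega), if_neg (by omega), if_pos h2]

lemma yf_c3 (hp : 3 ≤ p) (hq : 3 ≤ q) (m r : ℤ) (hm : 0 ≤ m) (h : r = (q:ℤ) + av f m - 1) :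
    yf p q f (m * Pz p q + r) = m * Pz p q + av f m := by
  have hA := av_cases f m; have hP := Pz_ge hp hq; have hPd : Pz p q = 2*(p:ℤ)+2*(q:ℤ)-5 := rfl
  rw [yf_eval hp hq m r hm (by omega) (by omega), if_neg (by omega), if_neg (by omega),
    if_pos h]
  omega

lemma yf_c4 (hp : 3 ≤ p) (hq : 3 ≤ q) (m r : ℤ) (hm : 0 ≤ m) (h1 : (q:ℤ) + av f m - 1 < r) (h2 : r ≤ (q:ℤ) + (p:ℤ) - 2) :
    yf p q f (m * Pz p q + r) = m * Pz p q + r := by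
  have hA := av_cases f m; have hP := Pz_ge hp hq; have hPd : Pz p q = 2*(p:ℤ)+2*(q:ℤ)-5 := rfl
  rw [yf_eval hp hq m r hm (by omega) (by omega), if_neg (by omega), if_neg (by omega),
    if_neg (by omega), if_pos h2]

lemma yf_c5 (hp : 3 ≤ p) (hq : 3 ≤ q) (m r : ℤ) (hm : 0 ≤ m) (h1 : (q:ℤ) + (p:ℤ) - 2 < r) (h2 : r ≤ (p:ℤ) + 2*(q:ℤ) - 5) :
    yf p q f (m * Pz p q + r) = m * Pz p q + r + 1 := by
  have hA := av_cases f m; have hP := Pz_ge hp hq; have hPd : Pz p q = 2*(p:ℤ)+2*(q:ℤ)-5 := rfl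
  rw [yf_eval hp hq m r hm (by omega) (by omega), if_neg (by omega), if_neg (by omega),
    if_neg (by omega), if_neg (by omega), if_pos h2]

lemma yf_c6 (hp : 3 ≤ p) (hq : 3 ≤ q) (m r : ℤ) (hm : 0 ≤ m) (h : r = (p:ℤ) + 2*(q:ℤ) - 4) :
    yf p q f (m * Pz p q + r) = -(m + 1) := by
  have hA := av_cases f m; have hP := Pz_ge hp hq; have hPd : Pz p q = 2*(p:ℤ)+2*(q:ℤ)-5 := rfl
  rw [yf_eval hp hq m r hm (by omega) (by omega), if_neg (by omega), if_neg (by omega),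
    if_neg (by omega), if_neg (by omega), if_neg (by omega), if_pos h]

lemma yf_c7 (hp : 3 ≤ p) (hq : 3 ≤ q) (m r : ℤ) (hm : 0 ≤ m) (h1 : (p:ℤ) + 2*(q:ℤ) - 4 < r) (h2 : r ≤ Pz p q - 1) :
    yf p q f (m * Pz p q + r) = m * Pz p q + r := by
  have hA := av_cases f m; have hP := Pz_ge hp hq; have hPd : Pz p q = 2*(p:ℤ)+2*(q:ℤ)-5 := rfl
  rw [yf_eval hp hq m r hm (by omega) (by omega), if_neg (by omega), if_neg (by omega),
    if_neg (by omega), if_neg (by omega), if_neg (by omega), if_neg (by omega), if_pos h2]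

lemma yf_c8 (hp : 3 ≤ p) (hq : 3 ≤ q) (m : ℤ) (hm : 0 ≤ m) :
    yf p q f (m * Pz p q + Pz p q) = m * Pz p q + Pz p q + ((p:ℤ) + (q:ℤ) - 1) := by
  have hA := av_cases f m; have hP := Pz_ge hp hq; have hPd : Pz p q = 2*(p:ℤ)+2*(q:ℤ)-5 := rfl
  rw [yf_eval hp hq m (Pz p q) hm (by omega) le_rfl, if_neg (by omega), if_neg (by omega),
    if_neg (by omega), if_neg (by omega), if_neg (by omega), if_neg (by omega),
    if_neg (by omega)]

lemma iter_fix_of_orbit {g : ℤ → ℤ} {n j : ℕ} {s u : ℤ} (hs : g^[n] s = s) (hu : u = g^[j] s) :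
    g^[n] u = u := by
  subst hu
  rw [← Function.iterate_add_apply, Nat.add_comm, Function.iterate_add_apply, hs]

/-- run along x branch 4 -/
lemma xf_run4 (hp : 3 ≤ p) (hq : 3 ≤ q) (m : ℤ) (hm : 0 ≤ m) (r0 : ℤ) (h0 : (q:ℤ) + av f m ≤ r0) :
    ∀ (j : ℕ), r0 + (j:ℤ) ≤ (q:ℤ) + (p:ℤ) - 2 →
      (xf p q f)^[j] (m * Pz p q + r0) = m * Pz p q + r0 + j := by
  intro j
  induction j with
  | zero => intro _; simp
  | succ n ih =>
    intro h
    rw [Function.iterate_succ_apply', ih (by push_cast at h ⊢; omega)]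
    have e : m * Pz p q + r0 + (n:ℤ) = m * Pz p q + (r0 + (n:ℤ)) := by ring
    rw [e, xf_b4 hp hq m (r0 + (n:ℤ)) hm (by omega) (by push_cast at h ⊢; omega)]
    push_cast; ring

/-- run along x branch 7 -/
lemma xf_run7 (hp : 3 ≤ p) (hq : 3 ≤ q) (m : ℤ) (hm : 0 ≤ m) (r0 : ℤ) (h0 : (p:ℤ) + 2*(q:ℤ) - 3 ≤ r0) :
    ∀ (j : ℕ), r0 + (j:ℤ) ≤ Pz p q →
      (xf p q f)^[j] (m * Pz p q + r0) = m * Pz p q + r0 + j := by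
  intro j
  induction j with
  | zero => intro _; simp
  | succ n ih =>
    intro h
    rw [Function.iterate_succ_apply', ih (by push_cast at h ⊢; omega)]
    have e : m * Pz p q + r0 + (n:ℤ) = m * Pz p q + (r0 + (n:ℤ)) := by ring
    rw [e, xf_b7 hp hq m (r0 + (n:ℤ)) hm (by omega) (by push_cast at h ⊢; omega)]
    push_cast; ring

/-- run along y branch 2 -/
lemma yf_run2 (hp : 3 ≤ p) (hq : 3 ≤ q) (m : ℤ) (hm : 0 ≤ m) (r0 : ℤ) (h0 : av f m ≤ r0) :
    ∀ (j : ℕ), r0 + (j:ℤ) ≤ (q:ℤ) + av f m - 1 →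
      (yf p q f)^[j] (m * Pz p q + r0) = m * Pz p q + r0 + j := by
  intro j
  induction j with
  | zero => intro _; simp
  | succ n ih =>
    intro h
    rw [Function.iterate_succ_apply', ih (by push_cast at h ⊢; omega)]
    have e : m * Pz p q + r0 + (n:ℤ) = m * Pz p q + (r0 + (n:ℤ)) := by ring
    rw [e, yf_c2 hp hq m (r0 + (n:ℤ)) hm (by omega) (by push_cast at h ⊢; omega)]
    push_cast; ring

/-- run along y branch 5 -/
lemma yf_run5 (hp : 3 ≤ p) (hq : 3 ≤ q) (m : ℤ) (hm : 0 ≤ m) (r0 : ℤ) (h0 : (q:ℤ) + (p:ℤ) - 1 ≤ r0) :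
    ∀ (j : ℕ), r0 + (j:ℤ) ≤ (p:ℤ) + 2*(q:ℤ) - 4 →
      (yf p q f)^[j] (m * Pz p q + r0) = m * Pz p q + r0 + j := by
  intro j
  induction j with
  | zero => intro _; simp
  | succ n ih =>
    intro h
    rw [Function.iterate_succ_apply', ih (by push_cast at h ⊢; omega)]
    have e : m * Pz p q + r0 + (n:ℤ) = m * Pz p q + (r0 + (n:ℤ)) := by ring
    rw [e, yf_c5 hp hq m (r0 + (n:ℤ)) hm (by omega) (by push_cast at h ⊢; omega)]
    push_cast; ring


lemma iter_congr {g : ℤ → ℤ} {a b : ℕ} (h : a = b) (s : ℤ) : g^[a] s = g^[b] s := by rw [h]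

lemma exists_mr (hp : 3 ≤ p) (hq : 3 ≤ q) (u : ℤ) (hu : 0 < u) :
    ∃ m r, 0 ≤ m ∧ 1 ≤ r ∧ r ≤ Pz p q ∧ u = m * Pz p q + r := by
  have hP := Pz_ge hp hq
  refine ⟨(u-1)/Pz p q, u - ((u-1)/Pz p q) * Pz p q, Int.ediv_nonneg (by omega) (by omega),
    ?_, ?_, by ring⟩
  · have h3 := Int.mul_ediv_add_emod (u-1) (Pz p q)
    have h0 := Int.emod_nonneg (u-1) (by omega : Pz p q ≠ 0)
    have hc : Pz p q * ((u-1)/Pz p q) = ((u-1)/Pz p q) * Pz p q := mul_comm _ _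
    omega
  · have h3 := Int.mul_ediv_add_emod (u-1) (Pz p q)
    have h0 := Int.emod_lt_of_pos (u-1) (by omega : 0 < Pz p q)
    have hc : Pz p q * ((u-1)/Pz p q) = ((u-1)/Pz p q) * Pz p q := mul_comm _ _
    omega

/-- closure of the pendant x-cycle -/
lemma xf_pendant (hp : 3 ≤ p) (hq : 3 ≤ q) (m : ℤ) (hm : 0 ≤ m) :
    (xf p q f)^[p] (m * Pz p q + ((q:ℤ) + (p:ℤ) - 1)) =
      m * Pz p q + ((q:ℤ) + (p:ℤ) - 1) := by
  have hP := Pz_ge hp hq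
  have hPd : Pz p q = 2*(p:ℤ)+2*(q:ℤ)-5 := rfl
  have e1 : xf p q f (m * Pz p q + ((q:ℤ) + (p:ℤ) - 1)) = m * Pz p q + 1 :=
    xf_b5 hp hq m _ hm rfl
  rcases av_cases f m with hA | hA
  · -- A = 1
    have e2 : xf p q f (m * Pz p q + 1) = m * Pz p q + (1 + (q:ℤ)) := by
      rw [xf_b2 hp hq m 1 hm (by omega)]; ring
    have e3 : (xf p q f)^[p-3] (m * Pz p q + (1 + (q:ℤ))) =
        m * Pz p q + (1 + (q:ℤ)) + ((p:ℕ)-3 : ℕ) :=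
      xf_run4 hp hq m hm (1 + (q:ℤ)) (by omega) (p-3) (by push_cast; omega)
    have e4 : xf p q f (m * Pz p q + ((q:ℤ) + (p:ℤ) - 2)) =
        m * Pz p q + ((q:ℤ) + (p:ℤ) - 1) := by
      rw [xf_b4 hp hq m _ hm (by omega) (by omega)]; ring
    rw [iter_congr (show p = ((1 + (p-3)) + 1) + 1 from by omega)]
    rw [Function.iterate_add_apply, Function.iterate_add_apply, Function.iterate_add_apply]
    simp only [Function.iterate_one]
    rw [e1, e2, e3]
    have e5 : m * Pz p q + (1 + (q:ℤ)) + ((p:ℕ)-3 : ℕ) = m * Pz p q + ((q:ℤ)+(p:ℤ)-2) := by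
      push_cast; omega
    rw [e5, e4]
  · -- A = 2
    have e2 : xf p q f (m * Pz p q + 1) = m * Pz p q + 2 := by
      rw [xf_b1 hp hq m 1 hm le_rfl (by omega)]; ring
    have e3 : xf p q f (m * Pz p q + 2) = m * Pz p q + (2 + (q:ℤ)) := by
      rw [xf_b2 hp hq m 2 hm (by omega)]; ring
    by_cases hp3 : p = 3
    · subst hp3
      rw [iter_congr (show 3 = (1 + 1) + 1 from rfl)]
      rw [Function.iterate_add_apply, Function.iterate_add_apply]
      simp only [Function.iterate_one]
      rw [e1, e2, e3]
      push_cast; ring_nf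
    · have e4 : (xf p q f)^[p-4] (m * Pz p q + (2 + (q:ℤ))) =
          m * Pz p q + (2 + (q:ℤ)) + ((p:ℕ)-4 : ℕ) :=
        xf_run4 hp hq m hm (2 + (q:ℤ)) (by omega) (p-4) (by push_cast; omega)
      have e5 : xf p q f (m * Pz p q + ((q:ℤ) + (p:ℤ) - 2)) =
          m * Pz p q + ((q:ℤ) + (p:ℤ) - 1) := by
        rw [xf_b4 hp hq m _ hm (by omega) (by omega)]; ring
      rw [iter_congr (show p = (((1 + (p-4)) + 1) + 1) + 1 from by omega)]
      rw [Function.iterate_add_apply, Function.iterate_add_apply,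
        Function.iterate_add_apply, Function.iterate_add_apply]
      simp only [Function.iterate_one]
      rw [e1, e2, e3, e4]
      have e6 : m * Pz p q + (2 + (q:ℤ)) + ((p:ℕ)-4 : ℕ) = m * Pz p q + ((q:ℤ)+(p:ℤ)-2) := by
        push_cast; omega
      rw [e6, e5]

/-- closure of the chain x-cycle -/
lemma xf_chain (hp : 3 ≤ p) (hq : 3 ≤ q) (m : ℤ) (hm : 0 ≤ m) :
    (xf p q f)^[p] (-(m+1)) = -(m+1) := by
  have hP := Pz_ge hp hq
  have hPd : Pz p q = 2*(p:ℤ)+2*(q:ℤ)-5 := rfl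
  have e1 : xf p q f (-(m+1)) = m * Pz p q + ((p:ℤ) + 2*(q:ℤ) - 3) := by
    rw [xf_neg _ (by omega)]
    have : -(-(m+1)) - 1 = m := by ring
    rw [this]
  have e2 : (xf p q f)^[p-2] (m * Pz p q + ((p:ℤ) + 2*(q:ℤ) - 3)) =
      m * Pz p q + ((p:ℤ) + 2*(q:ℤ) - 3) + ((p:ℕ)-2 : ℕ) :=
    xf_run7 hp hq m hm _ le_rfl (p-2) (by push_cast; omega)
  have e3 : m * Pz p q + ((p:ℤ) + 2*(q:ℤ) - 3) + ((p:ℕ)-2 : ℕ) = m * Pz p q + Pz p q := by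
    push_cast; omega
  rw [iter_congr (show p = (1 + (p-2)) + 1 from by omega)]
  rw [Function.iterate_add_apply, Function.iterate_add_apply]
  simp only [Function.iterate_one]
  rw [e1, e2, e3, xf_b8 hp hq m hm]

theorem xf_iter (hp : 3 ≤ p) (hq : 3 ≤ q) (u : ℤ) : (xf p q f)^[p] u = u := by
  have hP := Pz_ge hp hq
  have hPd : Pz p q = 2*(p:ℤ)+2*(q:ℤ)-5 := rfl
  rcases lt_trichotomy u 0 with hu | hu | hu
  · have e : u = -(((-u-1)) + 1) := by ring
    rw [e]; exact xf_chain hp hq _ (by omega)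
  · subst hu; exact Function.iterate_fixed xf_zero p
  · obtain ⟨m, r, hm, h1, h2, rfl⟩ := exists_mr hp hq u hu
    have hA := av_cases f m
    have hpend := xf_pendant hp hq m hm (f := f)
    have hchain := xf_chain hp hq m hm (f := f)
    have e1 : xf p q f (m * Pz p q + ((q:ℤ) + (p:ℤ) - 1)) = m * Pz p q + 1 :=
      xf_b5 hp hq m _ hm rfl
    by_cases c1 : r < av f m
    · -- r = 1, A = 2
      refine iter_fix_of_orbit hpend ?_ (j := 1)
      simp only [Function.iterate_one]
      rw [e1]; omega
    by_cases c2 : r = av f m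
    · rcases hA with hA | hA
      · refine iter_fix_of_orbit hpend ?_ (j := 1)
        simp only [Function.iterate_one]
        rw [e1]; omega
      · refine iter_fix_of_orbit hpend ?_ (j := 2)
        rw [iter_congr (show (2:ℕ) = 1 + 1 from rfl), Function.iterate_add_apply]
        simp only [Function.iterate_one]
        rw [e1, xf_b1 hp hq m 1 hm le_rfl (by omega)]
        omega
    by_cases c3 : r ≤ (q:ℤ) + av f m - 1
    · exact Function.iterate_fixed (xf_b3 hp hq m r hm (by omega) c3) p
    by_cases c4 : r ≤ (q:ℤ) + (p:ℤ) - 2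
    · -- q + A ≤ r ≤ q+p-2 : u = x^[(r-q-A)+A+1] s1
      have hrw : (xf p q f)^[(r - (q:ℤ) - av f m).toNat] (m * Pz p q + ((q:ℤ) + av f m)) =
          m * Pz p q + r := by
        rw [xf_run4 hp hq m hm _ le_rfl _ (by rw [Int.toNat_of_nonneg (by omega)]; omega)]
        rw [Int.toNat_of_nonneg (by omega)]; ring
      rcases hA with hA | hA
      · refine iter_fix_of_orbit hpend ?_ (j := (r - (q:ℤ) - av f m).toNat + 2)
        rw [Function.iterate_add_apply]
        rw [iter_congr (show (2:ℕ) = 1 + 1 from rfl), Function.iterate_add_apply]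
        simp only [Function.iterate_one]
        rw [e1, xf_b2 hp hq m 1 hm (by omega)]
        rw [show m * Pz p q + 1 + (q:ℤ) = m * Pz p q + ((q:ℤ) + av f m) from by omega]
        exact hrw.symm
      · refine iter_fix_of_orbit hpend ?_ (j := (r - (q:ℤ) - av f m).toNat + 3)
        rw [Function.iterate_add_apply]
        rw [iter_congr (show (3:ℕ) = (1 + 1) + 1 from rfl), Function.iterate_add_apply,
          Function.iterate_add_apply]
        simp only [Function.iterate_one]
        rw [e1, xf_b1 hp hq m 1 hm le_rfl (by omega),
          show m * Pz p q + 1 + 1 = m * Pz p q + 2 from by ring,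
          xf_b2 hp hq m 2 hm (by omega),
          show m * Pz p q + 2 + (q:ℤ) = m * Pz p q + ((q:ℤ) + av f m) from by omega]
        exact hrw.symm
    by_cases c5 : r = (q:ℤ) + (p:ℤ) - 1
    · subst c5; exact hpend
    by_cases c6 : r ≤ (p:ℤ) + 2*(q:ℤ) - 4
    · exact Function.iterate_fixed (xf_b6 hp hq m r hm (by omega) c6) p
    by_cases c7 : r ≤ Pz p q - 1
    · refine iter_fix_of_orbit hchain ?_ (j := (r - ((p:ℤ) + 2*(q:ℤ) - 3)).toNat + 1)
      rw [Function.iterate_add_apply]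
      simp only [Function.iterate_one]
      have e1' : xf p q f (-(m+1)) = m * Pz p q + ((p:ℤ) + 2*(q:ℤ) - 3) := by
        rw [xf_neg _ (by omega)]
        rw [show -(-(m+1)) - 1 = m from by ring]
      rw [e1']
      rw [xf_run7 hp hq m hm _ le_rfl _ (by rw [Int.toNat_of_nonneg (by omega)]; omega)]
      rw [Int.toNat_of_nonneg (by omega)]; ring
    · -- r = P
      have hr : r = Pz p q := by omega
      refine iter_fix_of_orbit hchain ?_ (j := p - 1)
      have e1' : xf p q f (-(m+1)) = m * Pz p q + ((p:ℤ) + 2*(q:ℤ) - 3) := by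
        rw [xf_neg _ (by omega)]
        rw [show -(-(m+1)) - 1 = m from by ring]
      rw [iter_congr (show p - 1 = (p-2) + 1 from by omega), Function.iterate_add_apply]
      simp only [Function.iterate_one]
      rw [e1']
      rw [xf_run7 hp hq m hm _ le_rfl (p-2) (by push_cast; omega)]
      push_cast; omega

/-- closure of the pendant y-cycle -/
lemma yf_pendant (hp : 3 ≤ p) (hq : 3 ≤ q) (m : ℤ) (hm : 0 ≤ m) :
    (yf p q f)^[q] (m * Pz p q + av f m) = m * Pz p q + av f m := by
  have hP := Pz_ge hp hq
  have hPd : Pz p q = 2*(p:ℤ)+2*(q:ℤ)-5 := rfl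
  have hA := av_cases f m
  have e1 : (yf p q f)^[q-1] (m * Pz p q + av f m) =
      m * Pz p q + av f m + ((q:ℕ)-1 : ℕ) :=
    yf_run2 hp hq m hm _ le_rfl (q-1) (by push_cast; omega)
  rw [iter_congr (show q = 1 + (q-1) from by omega), Function.iterate_add_apply]
  simp only [Function.iterate_one]
  rw [e1, show m * Pz p q + av f m + ((q:ℕ)-1 : ℕ) = m * Pz p q + ((q:ℤ) + av f m - 1) from
    by push_cast; omega]
  exact yf_c3 hp hq m _ hm rfl

/-- closure of the chain y-cycle -/
lemma yf_chain (hp : 3 ≤ p) (hq : 3 ≤ q) (M : ℤ) (hM : 0 ≤ M) :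
    (yf p q f)^[q] (M * Pz p q) = M * Pz p q := by
  have hP := Pz_ge hp hq
  have hPd : Pz p q = 2*(p:ℤ)+2*(q:ℤ)-5 := rfl
  have e1 : yf p q f (M * Pz p q) = M * Pz p q + ((q:ℤ) + (p:ℤ) - 1) := by
    rcases eq_or_lt_of_le hM with h0 | h0
    · rw [← h0]; simp only [zero_mul]
      rw [yf_zero]; ring
    · rw [show M * Pz p q = (M-1) * Pz p q + Pz p q from by ring,
        yf_c8 hp hq (M-1) (by omega)]
      ring
  have e2 : (yf p q f)^[q-3] (M * Pz p q + ((q:ℤ) + (p:ℤ) - 1)) =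
      M * Pz p q + ((q:ℤ) + (p:ℤ) - 1) + ((q:ℕ)-3 : ℕ) :=
    yf_run5 hp hq M hM _ le_rfl (q-3) (by push_cast; omega)
  have e3 : M * Pz p q + ((q:ℤ) + (p:ℤ) - 1) + ((q:ℕ)-3 : ℕ) =
      M * Pz p q + ((p:ℤ) + 2*(q:ℤ) - 4) := by push_cast; omega
  have e4 : yf p q f (M * Pz p q + ((p:ℤ) + 2*(q:ℤ) - 4)) = -(M+1) :=
    yf_c6 hp hq M _ hM rfl
  have e5 : yf p q f (-(M+1)) = M * Pz p q := by
    rw [yf_neg _ (by omega), show -(-(M+1)) - 1 = M from by ring]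
  rw [iter_congr (show q = ((1 + 1) + (q-3)) + 1 from by omega)]
  rw [Function.iterate_add_apply, Function.iterate_add_apply, Function.iterate_add_apply]
  simp only [Function.iterate_one]
  rw [e1, e2, e3, e4, e5]

theorem yf_iter (hp : 3 ≤ p) (hq : 3 ≤ q) (u : ℤ) : (yf p q f)^[q] u = u := by
  have hP := Pz_ge hp hq
  have hPd : Pz p q = 2*(p:ℤ)+2*(q:ℤ)-5 := rfl
  rcases lt_trichotomy u 0 with hu | hu | hu
  · -- u = -(M+1) = y^[q-1] (M * P)
    set M := -u - 1 with hMdef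
    have hM : 0 ≤ M := by omega
    have hchain := yf_chain hp hq M hM (f := f)
    refine iter_fix_of_orbit hchain ?_ (j := q - 1)
    have e1 : yf p q f (M * Pz p q) = M * Pz p q + ((q:ℤ) + (p:ℤ) - 1) := by
      rcases eq_or_lt_of_le hM with h0 | h0
      · rw [← h0]; simp only [zero_mul]; rw [yf_zero]; ring
      · rw [show M * Pz p q = (M-1) * Pz p q + Pz p q from by ring,
          yf_c8 hp hq (M-1) (by omega)]
        ring
    rw [iter_congr (show q - 1 = ((1 + (q-3)) + 1) from by omega)]
    rw [Function.iterate_add_apply, Function.iterate_add_apply]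
    simp only [Function.iterate_one]
    rw [e1, yf_run5 hp hq M hM _ le_rfl (q-3) (by push_cast; omega),
      show M * Pz p q + ((q:ℤ) + (p:ℤ) - 1) + ((q:ℕ)-3 : ℕ) =
        M * Pz p q + ((p:ℤ) + 2*(q:ℤ) - 4) from by push_cast; omega,
      yf_c6 hp hq M _ hM rfl]
    omega
  · subst hu
    have := yf_chain hp hq 0 le_rfl (f := f)
    simpa using this
  · obtain ⟨m, r, hm, h1, h2, rfl⟩ := exists_mr hp hq u hu
    have hA := av_cases f m
    by_cases c1 : r < av f m
    · exact Function.iterate_fixed (yf_c1 hp hq m r hm h1 c1) q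
    by_cases c2 : r ≤ (q:ℤ) + av f m - 1
    · -- pendant: u = y^[(r - A).toNat] (mP + A)
      refine iter_fix_of_orbit (yf_pendant hp hq m hm) ?_ (j := (r - av f m).toNat)
      rw [yf_run2 hp hq m hm _ le_rfl _ (by rw [Int.toNat_of_nonneg (by omega)]; omega)]
      rw [Int.toNat_of_nonneg (by omega)]; ring
    by_cases c3 : r ≤ (q:ℤ) + (p:ℤ) - 2
    · exact Function.iterate_fixed (yf_c4 hp hq m r hm (by omega) c3) q
    by_cases c4 : r ≤ (p:ℤ) + 2*(q:ℤ) - 4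
    · -- chain: u = y^[1 + (r - (q+p-1)).toNat] (m P)
      refine iter_fix_of_orbit (yf_chain hp hq m hm) ?_ (j := (r - ((q:ℤ)+(p:ℤ)-1)).toNat + 1)
      rw [Function.iterate_add_apply]
      simp only [Function.iterate_one]
      have e1 : yf p q f (m * Pz p q) = m * Pz p q + ((q:ℤ) + (p:ℤ) - 1) := by
        rcases eq_or_lt_of_le hm with h0 | h0
        · rw [← h0]; simp only [zero_mul]; rw [yf_zero]; ring
        · rw [show m * Pz p q = (m-1) * Pz p q + Pz p q from by ring,
            yf_c8 hp hq (m-1) (by omega)]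
          ring
      rw [e1, yf_run5 hp hq m hm _ le_rfl _ (by rw [Int.toNat_of_nonneg (by omega)]; omega)]
      rw [Int.toNat_of_nonneg (by omega)]; ring
    by_cases c5 : r ≤ Pz p q - 1
    · exact Function.iterate_fixed (yf_c7 hp hq m r hm (by omega) c5) q
    · have hr : r = Pz p q := by omega
      subst hr
      have := yf_chain hp hq (m+1) (by omega) (f := f)
      rw [show (m+1) * Pz p q = m * Pz p q + Pz p q from by ring] at this
      exact this

section group
variable (p q : ℕ) (hp : 3 ≤ p) (hq : 3 ≤ q) (f : ℕ → Bool)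

/-- x as a permutation -/
def xE : Equiv.Perm ℤ where
  toFun := xf p q f
  invFun := (xf p q f)^[p-1]
  left_inv := by
    intro u
    have h : (xf p q f)^[(p-1)+1] u = u := by
      rw [show (p-1)+1 = p from by omega]; exact xf_iter hp hq u
    rw [Function.iterate_succ_apply] at h; exact h
  right_inv := by
    intro u
    have h : (xf p q f)^[(p-1)+1] u = u := by
      rw [show (p-1)+1 = p from by omega]; exact xf_iter hp hq u
    rw [Function.iterate_succ_apply'] at h; exact h

def yE : Equiv.Perm ℤ where
  toFun := yf p q f
  invFun := (yf p q f)^[q-1]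
  left_inv := by
    intro u
    have h : (yf p q f)^[(q-1)+1] u = u := by
      rw [show (q-1)+1 = q from by omega]; exact yf_iter hp hq u
    rw [Function.iterate_succ_apply] at h; exact h
  right_inv := by
    intro u
    have h : (yf p q f)^[(q-1)+1] u = u := by
      rw [show (q-1)+1 = q from by omega]; exact yf_iter hp hq u
    rw [Function.iterate_succ_apply'] at h; exact h

lemma xE_apply (u : ℤ) : xE p q hp hq f u = xf p q f u := rfl
lemma yE_apply (u : ℤ) : yE p q hp hq f u = yf p q f u := rfl

lemma xE_pow : (xE p q hp hq f) ^ p = 1 := by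
  ext u
  rw [Equiv.Perm.coe_pow]
  exact xf_iter hp hq u

lemma yE_pow : (yE p q hp hq f) ^ q = 1 := by
  ext u
  rw [Equiv.Perm.coe_pow]
  exact yf_iter hp hq u

def FF : Fin 2 → Equiv.Perm ℤ := ![xE p q hp hq f, yE p q hp hq f]

lemma relsat : ∀ r ∈ triangleRels p q, (FreeGroup.lift (FF p q hp hq f)) r = 1 := by
  intro r hr
  rcases hr with hr | hr
  · subst hr
    rw [map_pow, FreeGroup.lift_apply_of]
    show (FF p q hp hq f 0) ^ p = 1
    simp only [FF, Matrix.cons_val_zero]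
    exact xE_pow p q hp hq f
  · rw [Set.mem_singleton_iff] at hr
    subst hr
    rw [map_pow, FreeGroup.lift_apply_of]
    show (FF p q hp hq f 1) ^ q = 1
    simp only [FF, Matrix.cons_val_one, Matrix.head_cons]
    exact yE_pow p q hp hq f

def phi : Tri p q →* Equiv.Perm ℤ := PresentedGroup.toGroup (relsat p q hp hq f)

lemma phi_X : phi p q hp hq f (triX p q) = xE p q hp hq f := by
  show phi p q hp hq f (PresentedGroup.of 0) = _
  rw [phi, PresentedGroup.toGroup.of]
  rfl

lemma phi_Y : phi p q hp hq f (triY p q) = yE p q hp hq f := by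
  show phi p q hp hq f (PresentedGroup.of 1) = _
  rw [phi, PresentedGroup.toGroup.of]
  rfl

lemma phi_Z : phi p q hp hq f (triZ p q) = (Equiv.addRight (1:ℤ))⁻¹ := by
  rw [triZ, map_inv, map_mul, phi_X, phi_Y]
  congr 1
  ext u
  show xf p q f (yf p q f u) = u + 1
  exact xy_shift hp hq u

lemma shift_zpow : ∀ (k : ℤ) (u : ℤ), (((Equiv.addRight (1:ℤ))⁻¹) ^ k) u = u - k := by
  have hS : ∀ u : ℤ, ((Equiv.addRight (1:ℤ))⁻¹) u = u - 1 := by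
    intro u; simp; ring
  have hSi : ∀ u : ℤ, (((Equiv.addRight (1:ℤ))⁻¹)⁻¹) u = u + 1 := by
    intro u; simp
  intro k
  induction k using Int.induction_on with
  | zero => simp
  | succ n ih =>
    intro u
    rw [zpow_add_one, Equiv.Perm.mul_apply, ih, hS]
    ring
  | pred n ih =>
    intro u
    rw [zpow_sub_one, Equiv.Perm.mul_apply, hSi, ih]
    ring

lemma phi_Z_zpow (k : ℤ) (u : ℤ) : (phi p q hp hq f ((triZ p q) ^ k)) u = u - k := by
  rw [map_zpow, phi_Z]
  exact shift_zpow k u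

/-- the stabilizer of 0 -/
def stab : Subgroup (Tri p q) where
  carrier := {g | phi p q hp hq f g 0 = 0}
  one_mem' := by simp
  mul_mem' := by
    intro a b ha hb
    simp only [Set.mem_setOf_eq, map_mul, Equiv.Perm.mul_apply] at *
    rw [hb, ha]
  inv_mem' := by
    intro a ha
    simp only [Set.mem_setOf_eq, map_inv] at *
    calc ((phi p q hp hq f) a)⁻¹ 0 = ((phi p q hp hq f) a)⁻¹ ((phi p q hp hq f) a 0) := by
          rw [ha]
      _ = 0 := by simp

lemma mem_stab (g : Tri p q) : g ∈ stab p q hp hq f ↔ phi p q hp hq f g 0 = 0 := Iff.rfl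

lemma X_mem_stab : triX p q ∈ stab p q hp hq f := by
  rw [mem_stab, phi_X]
  show xf p q f 0 = 0
  exact xf_zero

lemma Z_not_mem_stab : triZ p q ∉ stab p q hp hq f := by
  rw [mem_stab, phi_Z]
  simp

lemma stab_nonparabolic : Nonparabolic (stab p q hp hq f) := by
  intro g hg hpar
  obtain ⟨k, c, hk, hgeq⟩ := hpar
  subst hgeq
  rw [mem_stab] at hg
  rw [map_mul, map_mul, map_inv] at hg
  rw [Equiv.Perm.mul_apply, Equiv.Perm.mul_apply] at hg
  have h2 := congrArg (fun z => ((phi p q hp hq f) c)⁻¹ z) hg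
  simp only [Equiv.Perm.inv_def, Equiv.symm_apply_apply] at h2
  rw [phi_Z_zpow p q hp hq f] at h2
  omega

end group

/-- the key arithmetic witness: for every d ≥ 2 there is a positive multiple u of d
with d ∤ x(u). -/
lemma witness (p q : ℕ) (hp : 3 ≤ p) (hq : 3 ≤ q) (f : ℕ → Bool) (d : ℤ) (hd : 2 ≤ d) :
    ∃ u : ℤ, 0 < u ∧ d ∣ u ∧ ¬ d ∣ xf p q f u := by
  have hP := Pz_ge hp hq
  have hPd : Pz p q = 2*(p:ℤ)+2*(q:ℤ)-5 := rfl
  by_cases hg : 1 < (Int.gcd d (Pz p q) : ℤ)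
  · -- gcd ≥ 2 : take u = e * P where d = gcd * e
    set g : ℤ := (Int.gcd d (Pz p q) : ℤ) with hgdef
    have hgl : g ∣ d := Int.gcd_dvd_left _ _
    have hgr : g ∣ Pz p q := Int.gcd_dvd_right _ _
    obtain ⟨e, he⟩ := hgl
    obtain ⟨P', hP'⟩ := hgr
    have hgpos : 0 < g := by omega
    have hepos : 0 < e := by
      by_contra h
      push_neg at h
      nlinarith [mul_nonpos_of_nonneg_of_nonpos (by omega : (0:ℤ) ≤ g) h]
    have helt : e < d := by
      nlinarith [mul_le_mul_of_nonneg_right (by omega : (2:ℤ) ≤ g) (le_of_lt hepos)]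
    refine ⟨e * Pz p q, mul_pos hepos (by omega), ⟨P', by rw [he, hP']; ring⟩, ?_⟩
    have hx : xf p q f (e * Pz p q) = -e := by
      rw [show e * Pz p q = (e-1) * Pz p q + Pz p q from by ring, xf_b8 hp hq (e-1) (by omega)]
      ring
    rw [hx]
    rw [dvd_neg]
    intro hcon
    have := Int.le_of_dvd hepos hcon
    omega
  · -- gcd = 1 : take u ≡ P-1 (mod P), a multiple of d
    have hgne : Int.gcd d (Pz p q) ≠ 0 := by
      intro h0
      rw [Int.gcd_eq_zero_iff] at h0
      omega
    have hg1 : Int.gcd d (Pz p q) = 1 := by omega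
    have hco : IsCoprime d (Pz p q) := Int.isCoprime_iff_gcd_eq_one.mpr hg1
    obtain ⟨s, t, hst⟩ := hco
    set c0 : ℤ := (s * (Pz p q - 1)) / Pz p q with hc0
    set w : ℤ := s * (Pz p q - 1) - Pz p q * c0 + Pz p q with hw
    have hwpos : Pz p q ≤ w := by
      have hmod := Int.emod_def (s * (Pz p q - 1)) (Pz p q)
      rw [← hc0] at hmod
      have hnn := Int.emod_nonneg (s * (Pz p q - 1)) (by omega : Pz p q ≠ 0)
      omega
    set u : ℤ := d * w with hu
    have hupos : 0 < u := mul_pos (by omega) (by omega)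
    set m : ℤ := -t * (Pz p q - 1) - d * c0 + d with hm
    have hkey : u = m * Pz p q + (Pz p q - 1) := by
      rw [hu, hw, hm]
      linear_combination (Pz p q - 1) * hst
    have hu2 : 2 * Pz p q ≤ u := by
      have l1 : 2 * Pz p q ≤ d * Pz p q :=
        mul_le_mul_of_nonneg_right (by omega : (2:ℤ) ≤ d) (by omega : (0:ℤ) ≤ Pz p q)
      have l2 : d * Pz p q ≤ d * w := mul_le_mul_of_nonneg_left hwpos (by omega : (0:ℤ) ≤ d)
      omega
    have hmnn : 0 ≤ m := by
      by_contra hmn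
      push_neg at hmn
      nlinarith [mul_le_mul_of_nonneg_right (by omega : m + 1 ≤ 0) (by omega : (0:ℤ) ≤ Pz p q)]
    refine ⟨u, hupos, ⟨w, rfl⟩, ?_⟩
    have hx : xf p q f u = u + 1 := by
      rw [hkey, xf_b7 hp hq m (Pz p q - 1) hmnn (by omega) (by omega)]
    rw [hx]
    intro hcon
    have hdu : d ∣ u := ⟨w, rfl⟩
    have hone : d ∣ 1 := by
      have := dvd_sub hcon hdu
      simpa using this
    have := Int.le_of_dvd one_pos hone
    omega

lemma stab_ne_top (p q : ℕ) (hp : 3 ≤ p) (hq : 3 ≤ q) (f : ℕ → Bool) : stab p q hp hq f ≠ ⊤ := by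
  intro h
  have := Z_not_mem_stab p q hp hq f
  rw [h] at this
  exact this (Subgroup.mem_top _)

lemma stab_coatom (p q : ℕ) (hp : 3 ≤ p) (hq : 3 ≤ q) (f : ℕ → Bool) : IsCoatom (stab p q hp hq f) := by
  constructor
  · exact stab_ne_top p q hp hq f
  · intro N hN
    -- D = { n | Z^n ∈ N }
    set D : AddSubgroup ℤ :=
      { carrier := {n : ℤ | (triZ p q) ^ n ∈ N}
        zero_mem' := by simp only [Set.mem_setOf_eq, zpow_zero]; exact one_mem N
        add_mem' := by
          intro a b ha hb
          simp only [Set.mem_setOf_eq] at *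
          rw [zpow_add]; exact mul_mem ha hb
        neg_mem' := by
          intro a ha
          simp only [Set.mem_setOf_eq] at *
          rw [zpow_neg]; exact inv_mem ha } with hD
    have hmemD : ∀ n : ℤ, n ∈ D ↔ (triZ p q) ^ n ∈ N := fun n => Iff.rfl
    have hstabN : stab p q hp hq f ≤ N := le_of_lt hN
    -- K1 : displacement of elements of N lies in D
    have K1 : ∀ g ∈ N, (phi p q hp hq f g) 0 ∈ D := by
      intro g hgN
      set n : ℤ := (phi p q hp hq f g) 0 with hn
      have hmem : (triZ p q) ^ n * g ∈ stab p q hp hq f := by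
        rw [mem_stab, map_mul, Equiv.Perm.mul_apply, ← hn, phi_Z_zpow]
        omega
      have : (triZ p q) ^ n = ((triZ p q) ^ n * g) * g⁻¹ := by group
      rw [hmemD, this]
      exact mul_mem (hstabN hmem) (inv_mem hgN)
    -- K2 : anything with displacement in D is in N
    have K2 : ∀ g : Tri p q, (phi p q hp hq f g) 0 ∈ D → g ∈ N := by
      intro g hgD
      set n : ℤ := (phi p q hp hq f g) 0 with hn
      have hmem : (triZ p q) ^ n * g ∈ stab p q hp hq f := by
        rw [mem_stab, map_mul, Equiv.Perm.mul_apply, ← hn, phi_Z_zpow]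
        omega
      have : g = ((triZ p q) ^ n)⁻¹ * ((triZ p q) ^ n * g) := by group
      rw [this]
      exact mul_mem (inv_mem ((hmemD n).mp hgD)) (hstabN hmem)
    -- D is nontrivial
    obtain ⟨g0, hg0N, hg0s⟩ := SetLike.exists_of_lt hN
    have hn0 : (phi p q hp hq f g0) 0 ≠ 0 := by
      intro h; exact hg0s ((mem_stab p q hp hq f g0).mpr h)
    have hn0D : (phi p q hp hq f g0) 0 ∈ D := K1 g0 hg0N
    -- D is cyclic
    obtain ⟨a, ha⟩ := Int.subgroup_cyclic D
    have hmemdvd : ∀ n : ℤ, n ∈ D ↔ a ∣ n := by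
      intro n
      rw [ha, AddSubgroup.mem_closure_singleton]
      constructor
      · rintro ⟨k, rfl⟩; exact ⟨k, by rw [smul_eq_mul]; ring⟩
      · rintro ⟨k, rfl⟩; exact ⟨k, by rw [smul_eq_mul]; ring⟩
    have hane : a ≠ 0 := by
      intro h0
      rw [h0] at hmemdvd
      have := (hmemdvd _).mp hn0D
      simp at this
      exact hn0 this
    by_cases ha1 : a = 1 ∨ a = -1
    · -- N = ⊤
      rw [eq_top_iff]
      intro g _
      apply K2
      rw [hmemdvd]
      rcases ha1 with rfl | rfl
      · exact one_dvd _
      · exact (neg_dvd).mpr (one_dvd _)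
    · -- |a| ≥ 2 : contradiction via witness
      exfalso
      set d : ℤ := |a| with hd
      have hd2 : 2 ≤ d := by
        rcases abs_cases a with ⟨h1, _⟩ | ⟨h1, _⟩ <;> omega
      have hmemdvd' : ∀ n : ℤ, n ∈ D ↔ d ∣ n := by
        intro n; rw [hmemdvd, hd, abs_dvd]
      obtain ⟨u, hupos, hdu, hndx⟩ := witness p q hp hq f d hd2
      -- the element X * Z^(-u) is in N
      have h1 : (triZ p q) ^ (-u) ∈ N := by
        rw [← hmemD, hmemdvd']
        exact dvd_neg.mpr hdu
      have h2 : triX p q * (triZ p q) ^ (-u) ∈ N :=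
        mul_mem (hstabN (X_mem_stab p q hp hq f)) h1
      have h3 := K1 _ h2
      rw [map_mul, Equiv.Perm.mul_apply, phi_Z_zpow, phi_X] at h3
      simp only [zero_sub, neg_neg] at h3
      rw [hmemdvd'] at h3
      exact hndx (by exact h3)

/-- distinctness -/
lemma stab_injective (p q : ℕ) (hp : 3 ≤ p) (hq : 3 ≤ q) :
    Function.Injective (fun f : ℕ → Bool => stab p q hp hq f) := by
  intro f f' hff
  by_contra hne
  obtain ⟨n, hn⟩ : ∃ n, f n ≠ f' n := by
    by_contra h
    push_neg at h
    exact hne (funext h)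
  have hP := Pz_ge hp hq
  set u : ℤ := (n:ℤ) * Pz p q + 1 with hu
  have hmn : (0:ℤ) ≤ (n:ℤ) := Int.natCast_nonneg n
  have htn : ((n:ℤ)).toNat = n := Int.toNat_natCast n
  have havne : av f (n:ℤ) ≠ av f' (n:ℤ) := by
    unfold av
    rw [htn]
    cases hfn : f n <;> cases hfn' : f' n <;> simp_all
  have hxne : xf p q f u ≠ xf p q f' u := by
    have hx : ∀ (h : ℕ → Bool), xf p q h u = if 1 < av h (n:ℤ) then u + 1 else u + (q:ℤ) := by
      intro h
      rcases av_cases h (n:ℤ) with hA | hA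
      · rw [if_neg (by omega), hu, xf_b2 hp hq (n:ℤ) 1 hmn hA.symm]
      · rw [if_pos (by omega), hu, xf_b1 hp hq (n:ℤ) 1 hmn le_rfl (by omega)]
    rw [hx f, hx f']
    rcases av_cases f (n:ℤ) with hA | hA <;> rcases av_cases f' (n:ℤ) with hA' | hA' <;>
      simp_all <;> omega
  -- the element w = Z^(e) * X * Z^(-u), e = xf f u
  set e : ℤ := xf p q f u with he
  set wel : Tri p q := (triZ p q) ^ e * triX p q * (triZ p q) ^ (-u) with hwel
  have hdisp : ∀ (h : ℕ → Bool), (phi p q hp hq h wel) 0 = xf p q h u - e := by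
    intro h
    have s1 : (phi p q hp hq h ((triZ p q) ^ (-u))) 0 = u := by
      rw [phi_Z_zpow]; ring
    rw [hwel, map_mul, map_mul, Equiv.Perm.mul_apply, Equiv.Perm.mul_apply, s1, phi_X]
    have s2 : (xE p q hp hq h) u = xf p q h u := rfl
    rw [s2, phi_Z_zpow]
  have hw1 : wel ∈ stab p q hp hq f := by
    rw [mem_stab, hdisp f]; omega
  have hw2 : wel ∉ stab p q hp hq f' := by
    rw [mem_stab, hdisp f']
    omega
  have hff' : stab p q hp hq f = stab p q hp hq f' := hff
  rw [hff'] at hw1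
  exact hw2 hw1

lemma conj_map_conj {G : Type*} [Group G] (g h : G) (M : Subgroup G) :
    Subgroup.map (MulAut.conj h).toMonoidHom (Subgroup.map (MulAut.conj g).toMonoidHom M) =
      Subgroup.map (MulAut.conj (h * g)).toMonoidHom M := by
  rw [Subgroup.map_map]
  have : (MulAut.conj h).toMonoidHom.comp (MulAut.conj g).toMonoidHom
      = (MulAut.conj (h * g)).toMonoidHom := by
    ext x
    simp only [MonoidHom.coe_comp, Function.comp_apply, MulEquiv.coe_toMonoidHom,
      MulAut.conj_apply]
    group
  rw [this]

lemma conj_map_one {G : Type*} [Group G] (M : Subgroup G) :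
    Subgroup.map (MulAut.conj (1:G)).toMonoidHom M = M := by
  ext x
  simp [Subgroup.mem_map, MulAut.conj_apply]

lemma conjRel_equiv {G : Type*} [Group G] (P : Subgroup G → Prop) :
    Equivalence (conjRel P) := by
  constructor
  · intro M; exact ⟨1, (conj_map_one _).symm⟩
  · rintro M N ⟨g, hg⟩
    refine ⟨g⁻¹, ?_⟩
    rw [hg, conj_map_conj, inv_mul_cancel, conj_map_one]
  · rintro M N K ⟨g, hg⟩ ⟨h, hh⟩
    exact ⟨h * g, by rw [hh, hg, conj_map_conj]⟩

lemma uncountable_funBool : ¬ Countable (ℕ → Bool) := by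
  intro h
  have e : Set ℕ ≃ (ℕ → Bool) := Equiv.arrowCongr (Equiv.refl ℕ) Equiv.propEquivBool
  have hcs : Countable (Set ℕ) := Countable.of_equiv _ e.symm
  obtain ⟨i, hi⟩ := (countable_iff_exists_injective (Set ℕ)).mp hcs
  exact Function.cantor_injective i hi

instance tri_countable (p q : ℕ) : Countable (Tri p q) := by
  have : Countable (FreeGroup (Fin 2)) := FreeGroup.toWord_injective.countable
  exact Quotient.countable

end TriCons

/-- For all integers p ≥ 3, q ≥ 3, the triangle group Δ(p,q,∞) has
uncountably many conjugacy classes of nonparabolic maximal subgroups. -/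
theorem uncountably_many_nonparabolic_maximal_q_ge_three (p q : ℕ) (hp : 3 ≤ p) (hq : 3 ≤ q) :
    Uncountable (Quot (conjRel (fun M : Subgroup (Tri p q) =>
      Nonparabolic M ∧ IsCoatom M))) := by
  classical
  set Pr : Subgroup (Tri p q) → Prop := fun M => Nonparabolic M ∧ IsCoatom M with hPr
  let T : (ℕ → Bool) → {M : Subgroup (Tri p q) // Pr M} := fun f =>
    ⟨TriCons.stab p q hp hq f,
      ⟨TriCons.stab_nonparabolic p q hp hq f, TriCons.stab_coatom p q hp hq f⟩⟩
  rw [← not_countable_iff]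
  intro hcnt
  haveI hcnt' : Countable (Quot (conjRel Pr)) := hcnt
  have hequiv := TriCons.conjRel_equiv (G := Tri p q) Pr
  let F : (ℕ → Bool) → Quot (conjRel Pr) := fun f => Quot.mk _ (T f)
  have hrel : ∀ f, conjRel Pr (Quot.out (F f)) (T f) := by
    intro f
    have h1 : Quot.mk (conjRel Pr) (Quot.out (F f)) = Quot.mk _ (T f) := by
      rw [Quot.out_eq]
    exact (hequiv.eqvGen_iff).mp (Quot.eq.mp h1)
  let C : (ℕ → Bool) → Tri p q := fun f => Classical.choose (hrel f)
  have hC : ∀ f, (T f : Subgroup (Tri p q)) =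
      Subgroup.map (MulAut.conj (C f)).toMonoidHom ((Quot.out (F f) : _)) :=
    fun f => Classical.choose_spec (hrel f)
  have hinj : Function.Injective (fun f => (F f, C f)) := by
    intro f f' h
    rw [Prod.mk.injEq] at h
    obtain ⟨h1, h2⟩ := h
    have hstab : TriCons.stab p q hp hq f = TriCons.stab p q hp hq f' := by
      have e1 := hC f
      have e2 := hC f'
      rw [h1, h2] at e1
      exact e1.trans e2.symm
    exact TriCons.stab_injective p q hp hq hstab
  have : Countable (ℕ → Bool) := hinj.countable
  exact TriCons.uncountable_funBool this
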